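/- arXiv:1305.4945 — 3 statements merged into one kernel-verified Lean document; each statement's English description precedes it below -/
import Mathlib

section
/- With 𝔇 = 𝔉 ⊕ 𝔉d as above, the k-linear map t : 𝔇 → 𝔇^op sending f ∈ 𝔉 to the function z ↦ f(−z) and d to s·d, where s ∈ 𝔉 is the function s(z) = (−1)^z, is a k-algebra isomorphism from 𝔇 to its opposite algebra. -/
/-- The shift map on the algebra of `k`-valued functions on `ℤ`. -/
def sh {k : Type*} [Field k] (f : ℤ → k) : ℤ → k := fun z => f (z + 1)

/-- Multiplication on `𝔇 = 𝔉 ⊕ 𝔉d`, elements `f + f'·d` encoded as pairs `(f, f')`. -/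
def Dmul {k : Type*} [Field k] (x y : (ℤ → k) × (ℤ → k)) : (ℤ → k) × (ℤ → k) :=
  (x.1 * y.1, x.1 * y.2 + x.2 * sh y.1)

/-- The sign function `s ∈ 𝔉`, `s(z) = (-1)^z`. -/
def sgn (k : Type*) [Field k] : ℤ → k := fun z => (-1 : k) ^ z

/-- The map `t : 𝔇 → 𝔇` sending `f ∈ 𝔉` to `z ↦ f(-z)` and `d` to `s·d`; on a general
element `f + f'·d` it is given by `t(f + f'd) = (z ↦ f(-z)) + (z ↦ (-1)^z f'(-z-1))·d`. -/
def tmap {k : Type*} [Field k] (x : (ℤ → k) × (ℤ → k)) : (ℤ → k) × (ℤ → k) :=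
  (fun z => x.1 (-z), fun z => (-1 : k) ^ z * x.2 (-z - 1))

/-- Inverse of `tmap`. -/
def tinv {k : Type*} [Field k] (x : (ℤ → k) × (ℤ → k)) : (ℤ → k) × (ℤ → k) :=
  (fun z => x.1 (-z), fun z => (-1 : k) ^ (-z - 1) * x.2 (-z - 1))

lemma neg_one_zpow_sq {k : Type*} [Field k] (n : ℤ) : (-1 : k) ^ n * (-1 : k) ^ n = 1 := by
  rw [← mul_zpow]; norm_num

/-- `t` is a `k`-algebra isomorphism from `𝔇` onto its opposite algebra:
it is bijective, `k`-linear, unital, sends `d = (0,1)` to `s·d = (0,s)`, and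
anti-multiplicative: `t(x·y) = t(y)·t(x)`. -/
theorem t_is_isomorphism_to_opposite (k : Type*) [Field k] :
    Function.Bijective (tmap : (ℤ → k) × (ℤ → k) → (ℤ → k) × (ℤ → k)) ∧
    (∀ x y : (ℤ → k) × (ℤ → k), tmap (x + y) = tmap x + tmap y) ∧
    (∀ (c : k) (x : (ℤ → k) × (ℤ → k)), tmap (c • x) = c • tmap x) ∧
    tmap ((1 : ℤ → k), (0 : ℤ → k)) = ((1 : ℤ → k), (0 : ℤ → k)) ∧
    tmap ((0 : ℤ → k), (1 : ℤ → k)) = ((0 : ℤ → k), sgn k) ∧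
    (∀ x y : (ℤ → k) × (ℤ → k), tmap (Dmul x y) = Dmul (tmap y) (tmap x)) := by
  refine ⟨?_, ?_, ?_, ?_, ?_, ?_⟩
  · have hli : Function.LeftInverse (tinv : _ → (ℤ → k) × (ℤ → k)) tmap := by
      intro x
      ext z
      · simp [tmap, tinv]
      · simp only [tmap, tinv]
        have : -(-z - 1) - 1 = z := by ring
        rw [this, ← mul_assoc, neg_one_zpow_sq, one_mul]
    have hri : Function.RightInverse (tinv : _ → (ℤ → k) × (ℤ → k)) tmap := by
      intro x
      ext z
      · simp [tmap, tinv]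
      · simp only [tmap, tinv]
        have h1 : -(-z - 1) - 1 = z := by ring
        rw [h1, ← mul_assoc, neg_one_zpow_sq, one_mul]
    exact ⟨hli.injective, hri.surjective⟩
  · intro x y
    ext z <;> simp [tmap, mul_add] <;> ring
  · intro c x
    ext z <;> simp [tmap] <;> ring
  · ext z <;> simp [tmap]
  · ext z <;> simp [tmap, sgn]
  · intro x y
    ext z
    · simp [tmap, Dmul]; ring
    · simp [tmap, Dmul, sh]
      have : (-1 : ℤ) + -z = -z - 1 := by ring
      rw [this]; ring
end

section
/- Let k be an algebraically closed field, and let A and B be finite-dimensional k-algebras with e ∈ A and f ∈ B primitive idempotents. Then e ⊗ f is a primitive idempotent of A ⊗_k B. -/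
/-- An idempotent `e` of a ring is primitive if it is nonzero and cannot be written as a
sum of two nonzero orthogonal idempotents. -/
def IsPrimitiveIdem {R : Type*} [Ring R] (e : R) : Prop :=
  IsIdempotentElem e ∧ e ≠ 0 ∧
    ∀ a b : R, IsIdempotentElem a → IsIdempotentElem b → a * b = 0 → b * a = 0 →
      e = a + b → a = 0 ∨ b = 0

section Basic
variable {R : Type*} [Ring R] {e : R}

/-- primitivity implies: idempotents in the corner of `e` are `0` or `e`. -/
lemma prim_corner_idem (he : IsPrimitiveIdem e) {c : R} (hc : IsIdempotentElem c)
    (h1 : e * c = c) (h2 : c * e = c) : c = 0 ∨ c = e := by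
  have hec : IsIdempotentElem (e - c) := by
    unfold IsIdempotentElem at *
    rw [sub_mul, mul_sub, mul_sub, he.1, h1, h2, hc]; simp
  have h3 : c * (e - c) = 0 := by rw [mul_sub, h2, hc.eq]; exact sub_self c
  have h4 : (e - c) * c = 0 := by rw [sub_mul, h1, hc.eq]; exact sub_self c
  have := he.2.2 c (e - c) hc hec h3 h4 (by noncomm_ring)
  rcases this with h | h
  · exact Or.inl h
  · right; rw [sub_eq_zero] at h; exact h.symm

lemma idem_pow (he : IsIdempotentElem e) {m : ℕ} (hm : 0 < m) : e ^ m = e := by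
  induction m with
  | zero => omega
  | succ n ih =>
    rcases Nat.eq_zero_or_pos n with h | h
    · subst h; simp
    · rw [pow_succ, ih h, he]

/-- a corner element with a two-sided corner inverse cannot be nilpotent (if `e ≠ 0`). -/
lemma no_nilpotent_unit (he0 : e ≠ 0) {z w : R} (hz : IsNilpotent z)
    (hze : e * z = z) (hwe : w * e = w) (h1 : w * z = e) (h2 : z * w = e) : False := by
  obtain ⟨m, hm⟩ := hz
  have key : ∀ j : ℕ, w ^ j * (e * z ^ j) = e := by
    intro j
    induction j with
    | zero => rw [pow_zero, pow_zero, mul_one, one_mul]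
    | succ n ih =>
      have hez : ∀ i : ℕ, e * z ^ (i+1) = z ^ (i+1) := by
        intro i; rw [pow_succ']
        rw [← mul_assoc, hze]
      calc w ^ (n+1) * (e * z ^ (n+1)) = w ^ n * (w * (e * z ^ (n+1))) := by
            rw [pow_succ, mul_assoc]
        _ = w ^ n * (w * z ^ (n+1)) := by rw [hez n]
        _ = w ^ n * (w * (z * z ^ n)) := by rw [pow_succ']
        _ = w ^ n * (e * z ^ n) := by rw [← mul_assoc w z, h1]
        _ = e := ih
  have := key m
  rw [hm, mul_zero, mul_zero] at this
  exact he0 this.symm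

/-- nilpotent corner element with a left corner inverse: contradiction. -/
lemma no_nilpotent_left_inv (he : IsPrimitiveIdem e) {n σ : R} (hn : IsNilpotent n)
    (hen : e * n = n) (hne : n * e = n) (heσ : e * σ = σ) (hσe : σ * e = σ)
    (h : σ * n = e) : False := by
  have hc : IsIdempotentElem (n * σ) := by
    unfold IsIdempotentElem
    calc n * σ * (n * σ) = n * (σ * n) * σ := by noncomm_ring
      _ = n * σ := by rw [h, mul_assoc, heσ]
  have h1 : e * (n * σ) = n * σ := by rw [← mul_assoc, hen]
  have h2 : (n * σ) * e = n * σ := by rw [mul_assoc, hσe]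
  rcases prim_corner_idem he hc h1 h2 with h0 | h0
  · have hn0 : n = 0 := by
      have : n * (σ * n) = (n * σ) * n := by noncomm_ring
      rw [h, hne, h0, zero_mul] at this
      exact this
    rw [hn0, mul_zero] at h
    exact he.2.1 h.symm
  · exact no_nilpotent_unit he.2.1 hn hen hσe h h0

/-- nilpotent corner element with a right corner inverse: contradiction. -/
lemma no_nilpotent_right_inv (he : IsPrimitiveIdem e) {n σ : R} (hn : IsNilpotent n)
    (hen : e * n = n) (hne : n * e = n) (heσ : e * σ = σ) (hσe : σ * e = σ)
    (h : n * σ = e) : False := by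
  have hc : IsIdempotentElem (σ * n) := by
    unfold IsIdempotentElem
    calc σ * n * (σ * n) = σ * (n * σ) * n := by noncomm_ring
      _ = σ * n := by rw [h, mul_assoc, hen]
  have h1 : e * (σ * n) = σ * n := by rw [← mul_assoc, heσ]
  have h2 : (σ * n) * e = σ * n := by rw [mul_assoc, hne]
  rcases prim_corner_idem he hc h1 h2 with h0 | h0
  · have hn0 : n = 0 := by
      have : n * (σ * n) = (n * σ) * n := by noncomm_ring
      rw [h0, h, mul_zero, hen] at this
      exact this.symm
    rw [hn0, zero_mul] at h
    exact he.2.1 h.symm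
  · exact no_nilpotent_unit he.2.1 hn hen hσe h0 h

end Basic


section Unit
variable {k : Type} [Field k] {R : Type} [Ring R] [Algebra k R] {e : R}

/-- a corner element `l • e + ν` with `l ≠ 0` and `ν` nilpotent has a two-sided
corner inverse. -/
lemma corner_unit (hee : e * e = e) {ν : R} (hν1 : e * ν = ν) (hν2 : ν * e = ν)
    (hnil : IsNilpotent ν) {l : k} (hl : l ≠ 0) :
    ∃ w : R, e * w = w ∧ w * e = w ∧ w * (l • e + ν) = e ∧ (l • e + ν) * w = e := by
  set t : R := (-l⁻¹) • ν with ht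
  have htnil : IsNilpotent t := hnil.smul _
  obtain ⟨u, hu⟩ := htnil.isUnit_one_sub
  have het : e * t = t := by rw [ht, mul_smul_comm, hν1]
  have hte : t * e = t := by rw [ht, smul_mul_assoc, hν2]
  have hcomm : e * (1 - t) = (1 - t) * e := by
    rw [mul_sub, sub_mul, het, hte, mul_one, one_mul]
  have hcu : Commute e ↑u := by rw [hu]; exact hcomm
  have hcui : Commute e ↑u⁻¹ := hcu.units_inv_right
  have h1 : (1 - t) * e = e - t := by rw [sub_mul, one_mul, hte]
  have h2 : e * (e - t) = e - t := by rw [mul_sub, hee, het]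
  have key : l • e + ν = l • (e - t) := by
    rw [smul_sub, ht, smul_smul]
    field_simp
    simp
  refine ⟨l⁻¹ • (↑u⁻¹ * e), ?_, ?_, ?_, ?_⟩
  · have : e * (↑u⁻¹ * e) = ↑u⁻¹ * e := by
      calc e * (↑u⁻¹ * e) = (e * ↑u⁻¹) * e := by rw [mul_assoc]
        _ = ↑u⁻¹ * (e * e) := by rw [hcui.eq, mul_assoc]
        _ = ↑u⁻¹ * e := by rw [hee]
    rw [mul_smul_comm, this]
  · rw [smul_mul_assoc, mul_assoc, hee]
  · rw [key, smul_mul_assoc, mul_smul_comm, smul_smul, inv_mul_cancel₀ hl, one_smul]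
    calc (↑u⁻¹ * e) * (e - t) = ↑u⁻¹ * (e * (e - t)) := by rw [mul_assoc]
      _ = ↑u⁻¹ * ((1 - t) * e) := by rw [h2, h1]
      _ = (↑u⁻¹ * ↑u) * e := by rw [← hu, mul_assoc]
      _ = e := by rw [Units.inv_mul, one_mul]
  · rw [key, smul_mul_assoc, mul_smul_comm, smul_smul, mul_inv_cancel₀ hl, one_smul]
    calc (e - t) * (↑u⁻¹ * e) = ((1 - t) * e) * (↑u⁻¹ * e) := by rw [h1]
      _ = (1 - t) * ((e * ↑u⁻¹) * e) := by rw [mul_assoc, mul_assoc]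
      _ = (1 - t) * (↑u⁻¹ * (e * e)) := by rw [hcui.eq, mul_assoc]
      _ = ((1 - t) * ↑u⁻¹) * e := by rw [hee, mul_assoc]
      _ = e := by rw [← hu, Units.mul_inv, one_mul]

end Unit

open Polynomial

open Polynomial

section Struct
variable {k : Type} [Field k] {R : Type} [Ring R] [Algebra k R] {e y : R}

lemma commute_aeval (h : Commute e y) (p : k[X]) : Commute e (aeval y p) := by
  induction p using Polynomial.induction_on' with
  | add p q hp hq => simpa [map_add] using hp.add_right hq
  | monomial n a =>
    rw [aeval_monomial]
    have hc : Commute e ((algebraMap k R) a) := Algebra.commute_algebraMap_right a e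
    exact hc.mul_right (h.pow_right n)

lemma isCoprime_linear_prod {l : k} {s : Multiset k} (hl : l ∉ s) :
    IsCoprime (X - C l) (s.map fun a => X - C a).prod := by
  induction s using Multiset.induction_on with
  | empty => simpa using isCoprime_one_right
  | cons a t ih =>
    rw [Multiset.map_cons, Multiset.prod_cons]
    have hla : l ≠ a := by rintro rfl; exact hl (Multiset.mem_cons_self _ _)
    have h1 : IsCoprime (X - C l) (X - C a) := by
      refine ⟨C ((a - l)⁻¹), -C ((a - l)⁻¹), ?_⟩
      have : (a : k) - l ≠ 0 := sub_ne_zero.mpr (Ne.symm hla)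
      rw [neg_mul, ← sub_eq_add_neg, ← mul_sub]
      have h2 : (X - C l) - (X - C a) = C (a - l) := by
        rw [map_sub]; ring
      rw [h2, ← C_mul, inv_mul_cancel₀ this, C_1]
    exact h1.mul_right (ih (fun hmem => hl (Multiset.mem_cons_of_mem hmem)))

end Struct

section Struct2
variable {k : Type} [Field k] {R : Type} [Ring R] [Algebra k R] {e : R}

lemma idem_pow' (hee : e * e = e) {m : ℕ} (hm : 0 < m) : e ^ m = e := by
  induction m with
  | zero => omega
  | succ n ih =>
    rcases Nat.eq_zero_or_pos n with h | h
    · subst h; simp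
    · rw [pow_succ, ih h, hee]

lemma conv_pow (hee : e * e = e) {x y : R} (hey : e * y = x) (hye : y * e = x) (l : k)
    {m : ℕ} (hm : 0 < m) (h : (aeval y ((X - C l) ^ m)) * e = 0) : (x - l • e) ^ m = 0 := by
  have hz : (y - algebraMap k R l) * e = x - l • e := by
    rw [sub_mul, hye, Algebra.algebraMap_eq_smul_one, smul_mul_assoc, one_mul]
  have hz' : e * (y - algebraMap k R l) = x - l • e := by
    rw [mul_sub, hey, ← Algebra.commutes l e, Algebra.algebraMap_eq_smul_one,
      smul_mul_assoc, one_mul]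
  have hcom : Commute (y - algebraMap k R l) e := hz.trans hz'.symm
  have haev : aeval y ((X - C l) ^ m) = (y - algebraMap k R l) ^ m := by
    rw [map_pow, map_sub, aeval_X, aeval_C]
  rw [haev] at h
  calc (x - l • e) ^ m = ((y - algebraMap k R l) * e) ^ m := by rw [hz]
    _ = (y - algebraMap k R l) ^ m * e ^ m := hcom.mul_pow m
    _ = (y - algebraMap k R l) ^ m * e := by rw [idem_pow' hee hm]
    _ = 0 := h

lemma rec_nilpotent (he : IsPrimitiveIdem e) {x y : R}
    (hey : e * y = x) (hye : y * e = x) :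
    ∀ (n : ℕ) (s : Multiset k), Multiset.card s ≤ n →
      (aeval y (s.map fun l => X - C l).prod) * e = 0 →
      ∃ l : k, IsNilpotent (x - l • e) := by
  classical
  have hee : e * e = e := he.1
  have hecomm : Commute e y := hey.trans hye.symm
  intro n
  induction n with
  | zero =>
    intro s hcard hs
    interval_cases hc : Multiset.card s
    · rw [Multiset.card_eq_zero] at hc
      subst hc
      simp only [Multiset.map_zero, Multiset.prod_zero, map_one, one_mul] at hs
      exact absurd hs he.2.1
  | succ n ih =>
    intro s hcard hs
    rcases eq_or_ne s 0 with rfl | hs0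
    · simp only [Multiset.map_zero, Multiset.prod_zero, map_one, one_mul] at hs
      exact absurd hs he.2.1
    obtain ⟨l₀, hl₀⟩ := Multiset.exists_mem_of_ne_zero hs0
    set m₀ := s.count l₀ with hm₀def
    have hm₀ : 0 < m₀ := Multiset.count_pos.mpr hl₀
    set s' := s.filter (fun a => ¬ a = l₀) with hs'def
    have hsplit : s = Multiset.replicate m₀ l₀ + s' := by
      rw [hs'def, hm₀def, ← Multiset.filter_eq' s l₀]
      exact (Multiset.filter_add_not (· = l₀) s).symm
    have hl₀s' : l₀ ∉ s' := by
      rw [hs'def]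
      simp
    set F : k[X] := (X - C l₀) ^ m₀ with hF
    set g : k[X] := (s'.map fun a => X - C a).prod with hg
    have hFg : (s.map fun l => X - C l).prod = F * g := by
      rw [hsplit, Multiset.map_add, Multiset.prod_add, Multiset.map_replicate,
        Multiset.prod_replicate]
    rw [hFg] at hs
    have hcop : IsCoprime F g := (isCoprime_linear_prod hl₀s').pow_left
    obtain ⟨u, v, huv⟩ := hcop
    set α := aeval y (u * F) with hα
    set β := aeval y (v * g) with hβ
    have hαβ : α + β = 1 := by rw [hα, hβ, ← map_add, huv, map_one]
    have hcα : Commute e α := commute_aeval hecomm _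
    have hcornerc1 : e * (α * e) = α * e := by
      rw [← mul_assoc, hcα.eq, mul_assoc, hee]
    have hcornerc2 : (α * e) * e = α * e := by rw [mul_assoc, hee]
    have hidemc : IsIdempotentElem (α * e) := by
      unfold IsIdempotentElem
      have hpoly : (u * F) * (u * F) = u * F - (u * v) * (F * g) := by
        have huF : u * F = 1 - v * g := by linear_combination huv
        nth_rewrite 2 [huF]
        ring
      calc (α * e) * (α * e) = α * ((e * α) * e) := by
            rw [mul_assoc, ← mul_assoc e α e]
        _ = α * ((α * e) * e) := by rw [hcα.eq]
        _ = α * (α * (e * e)) := by rw [mul_assoc α e e]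
        _ = (α * α) * e := by rw [hee, ← mul_assoc]
        _ = (aeval y ((u * F) * (u * F))) * e := by rw [hα, ← map_mul]
        _ = (aeval y (u * F - (u * v) * (F * g))) * e := by rw [hpoly]
        _ = α * e - aeval y (u * v) * ((aeval y (F * g)) * e) := by
            rw [map_sub, sub_mul, ← hα, map_mul, mul_assoc]
        _ = α * e := by rw [hs, mul_zero, sub_zero]
    rcases prim_corner_idem he hidemc hcornerc1 hcornerc2 with h0 | h0
    · -- c = 0 : then β * e = e and F kills e
      have hβe : β * e = e := by
        have h' : α * e + β * e = e := by rw [← add_mul, hαβ, one_mul]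
        rw [h0, zero_add] at h'
        exact h'
      have hFe : aeval y F * e = 0 := by
        calc aeval y F * e = aeval y F * (β * e) := by rw [hβe]
          _ = aeval y (F * (v * g)) * e := by rw [hβ, ← mul_assoc, ← map_mul]
          _ = aeval y (v) * (aeval y (F * g) * e) := by
              rw [show F * (v * g) = v * (F * g) by ring, map_mul, mul_assoc]
          _ = 0 := by rw [hs, mul_zero]
      exact ⟨l₀, m₀, conv_pow hee hey hye l₀ hm₀ hFe⟩
    · -- c = e : then g kills e, recurse
      have hge : aeval y g * e = 0 := by
        calc aeval y g * e = aeval y g * (α * e) := by rw [h0]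
          _ = aeval y (g * (u * F)) * e := by rw [hα, ← mul_assoc, ← map_mul]
          _ = aeval y u * (aeval y (F * g) * e) := by
              rw [show g * (u * F) = u * (F * g) by ring, map_mul, mul_assoc]
          _ = 0 := by rw [hs, mul_zero]
      have hcard' : Multiset.card s' ≤ n := by
        have : Multiset.card s = m₀ + Multiset.card s' := by
          rw [hsplit, Multiset.card_add, Multiset.card_replicate]
        omega
      exact ih s' hcard' hge

lemma corner_structure [IsAlgClosed k] [FiniteDimensional k R] (he : IsPrimitiveIdem e)
    {x : R} (hx1 : e * x = x) (hx2 : x * e = x) : ∃ l : k, IsNilpotent (x - l • e) := by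
  set y := x + (1 - e) with hy
  have hee : e * e = e := he.1
  have hey : e * y = x := by rw [hy, mul_add, mul_sub, mul_one, hee, sub_self, add_zero, hx1]
  have hye : y * e = x := by rw [hy, add_mul, sub_mul, one_mul, hee, sub_self, add_zero, hx2]
  have hint : IsIntegral k y := Algebra.IsIntegral.isIntegral y
  have hmonic := minpoly.monic hint
  have hsplits : (minpoly k y).Splits := IsAlgClosed.splits _
  have hp := hsplits.eq_prod_roots_of_monic hmonic
  have h0 : aeval y (((minpoly k y).roots.map fun a => X - C a).prod) * e = 0 := by
    rw [← hp, minpoly.aeval, zero_mul]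
  exact rec_nilpotent he hey hye (Multiset.card (minpoly k y).roots) _ le_rfl h0

end Struct2

section Nil
variable {k : Type} [Field k] [IsAlgClosed k] {R : Type} [Ring R] [Algebra k R]
  [FiniteDimensional k R] {e : R}

include k in
lemma corner_mul_nilpotent (he : IsPrimitiveIdem e) {r n : R}
    (hr1 : e * r = r) (hr2 : r * e = r) (hn1 : e * n = n) (hn2 : n * e = n)
    (hn : IsNilpotent n) : IsNilpotent (r * n) := by
  have hee : e * e = e := he.1
  have hc1 : e * (r * n) = r * n := by rw [← mul_assoc, hr1]
  have hc2 : (r * n) * e = r * n := by rw [mul_assoc, hn2]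
  obtain ⟨l, hl⟩ := corner_structure (k := k) he hc1 hc2
  by_cases hl0 : l = 0
  · subst hl0; simpa using hl
  exfalso
  set ν := r * n - l • e with hν
  have hν1 : e * ν = ν := by
    rw [hν, mul_sub, hc1, mul_smul_comm, hee]
  have hν2 : ν * e = ν := by
    rw [hν, sub_mul, hc2, smul_mul_assoc, hee]
  obtain ⟨w, hw1, hw2, hw3, hw4⟩ := corner_unit hee hν1 hν2 hl hl0
  have hkey : (w * r) * n = e := by
    have : l • e + ν = r * n := by rw [hν]; abel
    rw [mul_assoc, ← this, hw3]
  have hσ1 : e * (w * r) = w * r := by rw [← mul_assoc, hw1]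
  have hσ2 : (w * r) * e = w * r := by rw [mul_assoc, hr2]
  exact no_nilpotent_left_inv he hn hn1 hn2 hσ1 hσ2 hkey

include k in
lemma nilpotent_mul_corner (he : IsPrimitiveIdem e) {r n : R}
    (hr1 : e * r = r) (hr2 : r * e = r) (hn1 : e * n = n) (hn2 : n * e = n)
    (hn : IsNilpotent n) : IsNilpotent (n * r) := by
  have hee : e * e = e := he.1
  have hc1 : e * (n * r) = n * r := by rw [← mul_assoc, hn1]
  have hc2 : (n * r) * e = n * r := by rw [mul_assoc, hr2]
  obtain ⟨l, hl⟩ := corner_structure (k := k) he hc1 hc2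
  by_cases hl0 : l = 0
  · subst hl0; simpa using hl
  exfalso
  set ν := n * r - l • e with hν
  have hν1 : e * ν = ν := by
    rw [hν, mul_sub, hc1, mul_smul_comm, hee]
  have hν2 : ν * e = ν := by
    rw [hν, sub_mul, hc2, smul_mul_assoc, hee]
  obtain ⟨w, hw1, hw2, hw3, hw4⟩ := corner_unit hee hν1 hν2 hl hl0
  have hkey : n * (r * w) = e := by
    have : l • e + ν = n * r := by rw [hν]; abel
    rw [← mul_assoc, ← this, hw4]
  have hσ1 : e * (r * w) = r * w := by rw [← mul_assoc, hr1]
  have hσ2 : (r * w) * e = r * w := by rw [mul_assoc, hw2]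
  exact no_nilpotent_right_inv he hn hn1 hn2 hσ1 hσ2 hkey

include k in
lemma corner_add_nilpotent (he : IsPrimitiveIdem e) {n n' : R}
    (hn1 : e * n = n) (hn2 : n * e = n) (hn'1 : e * n' = n') (hn'2 : n' * e = n')
    (hn : IsNilpotent n) (hn' : IsNilpotent n') : IsNilpotent (n + n') := by
  have hee : e * e = e := he.1
  have hc1 : e * (n + n') = n + n' := by rw [mul_add, hn1, hn'1]
  have hc2 : (n + n') * e = n + n' := by rw [add_mul, hn2, hn'2]
  obtain ⟨l, hl⟩ := corner_structure (k := k) he hc1 hc2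
  by_cases hl0 : l = 0
  · subst hl0; simpa using hl
  exfalso
  set ν := (n + n') - l • e with hν
  have hν1 : e * ν = ν := by
    rw [hν, mul_sub, hc1, mul_smul_comm, hee]
  have hν2 : ν * e = ν := by
    rw [hν, sub_mul, hc2, smul_mul_assoc, hee]
  obtain ⟨w, hw1, hw2, hw3, hw4⟩ := corner_unit hee hν1 hν2 hl hl0
  have hkey : w * n + w * n' = e := by
    have h' : l • e + ν = n + n' := by rw [hν]; abel
    rw [← mul_add, ← h', hw3]
  have hwn : IsNilpotent (w * n) := corner_mul_nilpotent (k := k) he hw1 hw2 hn1 hn2 hn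
  have hwn' : IsNilpotent (w * n') := corner_mul_nilpotent (k := k) he hw1 hw2 hn'1 hn'2 hn'
  have hwn1 : e * (w * n) = w * n := by rw [← mul_assoc, hw1]
  have hwn2 : (w * n) * e = w * n := by rw [mul_assoc, hn2]
  have hwn'1 : e * (w * n') = w * n' := by rw [← mul_assoc, hw1]
  have hwn'2 : (w * n') * e = w * n' := by rw [mul_assoc, hn'2]
  obtain ⟨w₂, hw₂1, hw₂2, hw₂3, hw₂4⟩ :=
    corner_unit (k := k) hee (ν := -(w * n)) (by rw [mul_neg, hwn1]) (by rw [neg_mul, hwn2])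
      hwn.neg (l := (1 : k)) one_ne_zero
  have : w₂ * (w * n') = e := by
    have h'' : (1 : k) • e + -(w * n) = w * n' := by
      rw [one_smul, ← hkey]; abel
    rw [← h'', hw₂3]
  exact no_nilpotent_left_inv he hwn' hwn'1 hwn'2 hw₂1 hw₂2 this

variable (k) in
/-- the corner subspace `eRe`. -/
def cornerSub (e : R) : Submodule k R where
  carrier := {x | e * x = x ∧ x * e = x}
  add_mem' := by
    rintro a b ⟨ha1, ha2⟩ ⟨hb1, hb2⟩
    exact ⟨by rw [mul_add, ha1, hb1], by rw [add_mul, ha2, hb2]⟩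
  zero_mem' := ⟨mul_zero e, zero_mul e⟩
  smul_mem' := by
    rintro c x ⟨h1, h2⟩
    exact ⟨by rw [mul_smul_comm, h1], by rw [smul_mul_assoc, h2]⟩

lemma mem_cornerSub {x : R} : x ∈ cornerSub k e ↔ e * x = x ∧ x * e = x := Iff.rfl

variable (k) in
/-- the subspace of nilpotent elements of the corner `eRe`. -/
def nilSub (he : IsPrimitiveIdem e) : Submodule k R where
  carrier := {x | (e * x = x ∧ x * e = x) ∧ IsNilpotent x}
  add_mem' := by
    rintro a b ⟨⟨ha1, ha2⟩, hna⟩ ⟨⟨hb1, hb2⟩, hnb⟩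
    exact ⟨⟨by rw [mul_add, ha1, hb1], by rw [add_mul, ha2, hb2]⟩,
      corner_add_nilpotent (k := k) he ha1 ha2 hb1 hb2 hna hnb⟩
  zero_mem' := ⟨⟨mul_zero e, zero_mul e⟩, IsNilpotent.zero⟩
  smul_mem' := by
    rintro c x ⟨⟨h1, h2⟩, hn⟩
    exact ⟨⟨by rw [mul_smul_comm, h1], by rw [smul_mul_assoc, h2]⟩, hn.smul c⟩

lemma mem_nilSub {he : IsPrimitiveIdem e} {x : R} :
    x ∈ nilSub k he ↔ (e * x = x ∧ x * e = x) ∧ IsNilpotent x := Iff.rfl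

lemma nilSub_le_cornerSub (he : IsPrimitiveIdem e) : nilSub k he ≤ cornerSub k e :=
  fun _ hx => hx.1

lemma cornerSub_mul_self : cornerSub k e * cornerSub k e ≤ cornerSub k e := by
  rw [Submodule.mul_le]
  rintro r ⟨hr1, hr2⟩ s ⟨hs1, hs2⟩
  exact ⟨by rw [← mul_assoc, hr1], by rw [mul_assoc, hs2]⟩

lemma cornerSub_mul_nilSub (he : IsPrimitiveIdem e) :
    cornerSub k e * nilSub k he ≤ nilSub k he := by
  rw [Submodule.mul_le]
  rintro r ⟨hr1, hr2⟩ x ⟨⟨hx1, hx2⟩, hxn⟩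
  exact ⟨⟨by rw [← mul_assoc, hr1], by rw [mul_assoc, hx2]⟩,
    corner_mul_nilpotent (k := k) he hr1 hr2 hx1 hx2 hxn⟩

lemma nilSub_mul_cornerSub (he : IsPrimitiveIdem e) :
    nilSub k he * cornerSub k e ≤ nilSub k he := by
  rw [Submodule.mul_le]
  rintro x ⟨⟨hx1, hx2⟩, hxn⟩ r ⟨hr1, hr2⟩
  exact ⟨⟨by rw [← mul_assoc, hx1], by rw [mul_assoc, hr2]⟩,
    nilpotent_mul_corner (k := k) he hr1 hr2 hx1 hx2 hxn⟩

lemma nilSub_mul_self (he : IsPrimitiveIdem e) : nilSub k he * nilSub k he ≤ nilSub k he :=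
  le_trans (mul_le_mul_left (nilSub_le_cornerSub he) _) (cornerSub_mul_nilSub he)

lemma nilSub_pow_succ_le (he : IsPrimitiveIdem e) (i : ℕ) :
    (nilSub k he) ^ (i + 2) ≤ (nilSub k he) ^ (i + 1) := by
  have h1 : (nilSub k he) ^ (i + 2) = (nilSub k he) ^ i * ((nilSub k he) * nilSub k he) := by
    rw [pow_succ, pow_succ, mul_assoc]
  rw [h1, pow_succ]
  exact mul_le_mul_right (nilSub_mul_self he) _

lemma nilSub_pow_le (he : IsPrimitiveIdem e) (i : ℕ) :
    (nilSub k he) ^ (i + 1) ≤ nilSub k he := by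
  induction i with
  | zero => rw [pow_one]
  | succ n ih => exact le_trans (nilSub_pow_succ_le he n) ih

lemma nilSub_pow_eq_bot (he : IsPrimitiveIdem e) :
    ∃ m : ℕ, 0 < m ∧ (nilSub k he) ^ m = ⊥ := by
  set N := nilSub k he with hN
  -- find a minimal power
  obtain ⟨P, ⟨m, hm⟩, hmin⟩ := IsArtinian.set_has_minimal
    {P : Submodule k R | ∃ i : ℕ, P = N ^ (i + 1)} ⟨N, 0, by rw [pow_one]⟩
  subst hm
  have hstab : N ^ (m + 2) = N ^ (m + 1) := by
    rcases lt_or_eq_of_le (nilSub_pow_succ_le (k := k) he m) with hlt | heq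
    · exact absurd hlt (hmin _ ⟨m + 1, rfl⟩)
    · exact heq
  have hM : ∀ j : ℕ, N ^ (m + 1 + j) = N ^ (m + 1) := by
    intro j
    induction j with
    | zero => rfl
    | succ i ih =>
      rw [show m + 1 + (i + 1) = (m + 1 + i) + 1 by omega, pow_succ, ih, ← pow_succ, hstab]
  set M := N ^ (m + 1) with hMdef
  have hMM : M * M = M := by
    rw [hMdef, ← pow_add]
    have : m + 1 + (m + 1) = m + 1 + (m + 1) := rfl
    exact hM (m + 1)
  have hMN : M ≤ N := nilSub_pow_le (k := k) he m
  refine ⟨m + 1, Nat.succ_pos m, ?_⟩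
  by_contra hM0
  -- Nakayama-style argument
  obtain ⟨L, ⟨hLM, hML, hML0⟩, hLmin⟩ := IsArtinian.set_has_minimal
    {L : Submodule k R | L ≤ M ∧ M * L ≤ L ∧ M * L ≠ ⊥}
    ⟨M, le_rfl, hMM.le, by rw [hMM]; exact hM0⟩
  have hex : ∃ a ∈ L, M * Submodule.span k {a} ≠ ⊥ := by
    by_contra hall
    push_neg at hall
    apply hML0
    rw [eq_bot_iff, Submodule.mul_le]
    intro x hx z hz
    have : x * z ∈ M * Submodule.span k {z} :=
      Submodule.mul_mem_mul hx (Submodule.mem_span_singleton_self z)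
    rw [hall z hz] at this
    exact this
  obtain ⟨a, haL, ha0⟩ := hex
  have hspan_le : Submodule.span k {a} ≤ L := by
    rw [Submodule.span_le, Set.singleton_subset_iff]; exact haL
  have hL'le : M * Submodule.span k {a} ≤ L :=
    le_trans (mul_le_mul_right hspan_le _) hML
  have hML' : M * (M * Submodule.span k {a}) = M * Submodule.span k {a} := by
    rw [← mul_assoc, hMM]
  have hL'mem : M * Submodule.span k {a} ∈
      {L : Submodule k R | L ≤ M ∧ M * L ≤ L ∧ M * L ≠ ⊥} := by
    refine ⟨le_trans hL'le hLM, hML'.le, ?_⟩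
    rw [hML']
    exact ha0
  have hL'eq : M * Submodule.span k {a} = L := by
    rcases lt_or_eq_of_le hL'le with hlt | heq
    · exact absurd hlt (hLmin _ hL'mem)
    · exact heq
  have haL' : a ∈ M * Submodule.span k {a} := hL'eq.symm ▸ haL
  rw [Submodule.mem_mul_span_singleton] at haL'
  obtain ⟨z, hzM, hza⟩ := haL'
  obtain ⟨j, hj⟩ := (hMN hzM).2
  have hzia : ∀ i : ℕ, z ^ i * a = a := by
    intro i
    induction i with
    | zero => rw [pow_zero, one_mul]
    | succ i ih => rw [pow_succ', mul_assoc, ih, hza]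
  have ha_zero : a = 0 := by
    have := hzia j
    rw [hj, zero_mul] at this
    exact this.symm
  apply ha0
  rw [ha_zero, Submodule.span_zero_singleton, Submodule.mul_bot]

end Nil

section Tensor
open TensorProduct

variable {k : Type} [Field k] [IsAlgClosed k]
  {A B : Type} [Ring A] [Algebra k A] [FiniteDimensional k A]
  [Ring B] [Algebra k B] [FiniteDimensional k B]

lemma map2_mul_le (M M' : Submodule k A) (N N' : Submodule k B) :
    Submodule.map₂ (TensorProduct.mk k A B) M N * Submodule.map₂ (TensorProduct.mk k A B) M' N' ≤
      Submodule.map₂ (TensorProduct.mk k A B) (M * M') (N * N') := by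
  rw [Submodule.map₂_eq_span_image2, Submodule.map₂_eq_span_image2, Submodule.span_mul_span]
  rw [Submodule.span_le]
  rintro z ⟨_, ⟨x, hx, y, hy, rfl⟩, _, ⟨x', hx', y', hy', rfl⟩, rfl⟩
  simp only [TensorProduct.mk_apply, Algebra.TensorProduct.tmul_mul_tmul]
  exact Submodule.apply_mem_map₂ _
    (Submodule.mul_mem_mul hx hx') (Submodule.mul_mem_mul hy hy')

lemma corner_tensor_mem (e : A) (f : B) (hee : e * e = e) (hff : f * f = f)
    (t : A ⊗[k] B) :
    ((e ⊗ₜ[k] f) * t) * (e ⊗ₜ[k] f) ∈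
      Submodule.map₂ (TensorProduct.mk k A B) (cornerSub k e) (cornerSub k f) := by
  induction t with
  | zero => simp only [mul_zero, zero_mul]; exact Submodule.zero_mem _
  | tmul a b =>
    have h1 : ((e ⊗ₜ[k] f) * (a ⊗ₜ[k] b)) * (e ⊗ₜ[k] f) = ((e * a) * e) ⊗ₜ[k] ((f * b) * f) := by
      rw [Algebra.TensorProduct.tmul_mul_tmul, Algebra.TensorProduct.tmul_mul_tmul]
    rw [h1]
    refine Submodule.apply_mem_map₂ _ ?_ ?_
    · exact ⟨by rw [← mul_assoc, ← mul_assoc, hee], by rw [mul_assoc, hee]⟩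
    · exact ⟨by rw [← mul_assoc, ← mul_assoc, hff], by rw [mul_assoc, hff]⟩
  | add x y hx hy =>
    rw [mul_add, add_mul]
    exact Submodule.add_mem _ hx hy

theorem primitive_idem_tensor' (e : A) (f : B) (he : IsPrimitiveIdem e) (hf : IsPrimitiveIdem f) :
    IsPrimitiveIdem (e ⊗ₜ[k] f : A ⊗[k] B) := by
  classical
  set E : A ⊗[k] B := e ⊗ₜ[k] f with hE
  have hee : e * e = e := he.1
  have hff : f * f = f := hf.1
  have hEidem : IsIdempotentElem E := by
    unfold IsIdempotentElem
    rw [hE, Algebra.TensorProduct.tmul_mul_tmul, hee, hff]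
  -- E ≠ 0
  have hEne : E ≠ 0 := by
    intro h0
    obtain ⟨φ, hφ⟩ : ∃ φ : Module.Dual k A, φ e ≠ 0 := by
      by_contra hall
      push_neg at hall
      exact he.2.1 ((Module.forall_dual_apply_eq_zero_iff k e).mp hall)
    obtain ⟨ψ, hψ⟩ : ∃ ψ : Module.Dual k B, ψ f ≠ 0 := by
      by_contra hall
      push_neg at hall
      exact hf.2.1 ((Module.forall_dual_apply_eq_zero_iff k f).mp hall)
    have := congrArg (fun t => (TensorProduct.lid k k) ((TensorProduct.map φ ψ) t)) h0
    simp only [hE, TensorProduct.map_tmul, TensorProduct.lid_tmul, map_zero] at this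
    rw [smul_eq_mul] at this
    exact mul_ne_zero hφ hψ this
  -- the submodules
  set CA := cornerSub k e with hCA
  set CB := cornerSub k f with hCB
  set NA := nilSub k he with hNA
  set NB := nilSub k hf with hNB
  set mk2 := TensorProduct.mk k A B with hmk2
  set IT1 := Submodule.map₂ mk2 (NA : Submodule k A) CB with hIT1
  set IT2 := Submodule.map₂ mk2 CA NB with hIT2
  set J := IT1 ⊔ IT2 with hJ
  obtain ⟨mA, hmA, hNApow⟩ := nilSub_pow_eq_bot (k := k) he
  obtain ⟨mB, hmB, hNBpow⟩ := nilSub_pow_eq_bot (k := k) hf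
  have he_mem : e ∈ CA := ⟨hee, hee⟩
  have hf_mem : f ∈ CB := ⟨hff, hff⟩
  -- absorption facts
  have hCabsorbA : ∀ i : ℕ, CA * (NA ^ i * CA) ≤ NA ^ i * CA := by
    intro i
    cases i with
    | zero =>
      rw [pow_zero, one_mul]
      exact cornerSub_mul_self
    | succ n =>
      have h1 : CA * NA ^ (n + 1) ≤ NA ^ (n + 1) := by
        rw [pow_succ']
        rw [← mul_assoc]
        exact mul_le_mul_left (cornerSub_mul_nilSub (k := k) he) _
      rw [← mul_assoc]
      exact mul_le_mul_left h1 _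
  have hCabsorbB : ∀ j : ℕ, CB * (NB ^ j * CB) ≤ NB ^ j * CB := by
    intro j
    cases j with
    | zero =>
      rw [pow_zero, one_mul]
      exact cornerSub_mul_self
    | succ n =>
      have h1 : CB * NB ^ (n + 1) ≤ NB ^ (n + 1) := by
        rw [pow_succ']
        rw [← mul_assoc]
        exact mul_le_mul_left (cornerSub_mul_nilSub (k := k) hf) _
      rw [← mul_assoc]
      exact mul_le_mul_left h1 _
  -- the graded pieces
  set P : ℕ → ℕ → Submodule k (A ⊗[k] B) :=
    fun i j => Submodule.map₂ mk2 (NA ^ i * CA) (NB ^ j * CB) with hP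
  have hstep1 : ∀ i j : ℕ, IT1 * P i j ≤ P (i + 1) j := by
    intro i j
    refine le_trans (map2_mul_le _ _ _ _) (Submodule.map₂_le_map₂ ?_ ?_)
    · rw [← mul_assoc, ← pow_succ']
    · exact hCabsorbB j
  have hstep2 : ∀ i j : ℕ, IT2 * P i j ≤ P i (j + 1) := by
    intro i j
    refine le_trans (map2_mul_le _ _ _ _) (Submodule.map₂_le_map₂ ?_ ?_)
    · exact hCabsorbA i
    · rw [← mul_assoc, ← pow_succ']
  set Q : ℕ → Submodule k (A ⊗[k] B) :=
    fun r => ⨆ (p : ℕ × ℕ) (_ : p.1 + p.2 = r), P p.1 p.2 with hQ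
  have hIT1le : IT1 ≤ P 1 0 := by
    refine Submodule.map₂_le_map₂ ?_ ?_
    · rw [pow_one]
      intro n hn
      exact hn.1.2 ▸ Submodule.mul_mem_mul hn he_mem
    · rw [pow_zero, one_mul]
  have hIT2le : IT2 ≤ P 0 1 := by
    refine Submodule.map₂_le_map₂ ?_ ?_
    · rw [pow_zero, one_mul]
    · rw [pow_one]
      intro n hn
      exact hn.1.2 ▸ Submodule.mul_mem_mul hn hf_mem
  have hJQ : ∀ r : ℕ, J ^ (r + 1) ≤ Q (r + 1) := by
    intro r
    induction r with
    | zero =>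
      rw [pow_one, hJ]
      refine sup_le ?_ ?_
      · exact le_trans hIT1le (le_iSup_of_le (1, 0) (le_iSup_of_le rfl le_rfl))
      · exact le_trans hIT2le (le_iSup_of_le (0, 1) (le_iSup_of_le rfl le_rfl))
    | succ r ih =>
      rw [pow_succ']
      refine le_trans (mul_le_mul_right ih _) ?_
      rw [hJ, Submodule.sup_mul]
      refine sup_le ?_ ?_
      · rw [hQ]
        rw [Submodule.mul_iSup]
        refine iSup_le fun p => ?_
        rw [Submodule.mul_iSup]
        refine iSup_le fun hp => ?_
        refine le_trans (hstep1 p.1 p.2) ?_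
        exact le_iSup_of_le (p.1 + 1, p.2) (le_iSup_of_le (by omega) le_rfl)
      · rw [hQ]
        rw [Submodule.mul_iSup]
        refine iSup_le fun p => ?_
        rw [Submodule.mul_iSup]
        refine iSup_le fun hp => ?_
        refine le_trans (hstep2 p.1 p.2) ?_
        exact le_iSup_of_le (p.1, p.2 + 1) (le_iSup_of_le (by omega) le_rfl)
  have hQbot : Q (mA + mB) = ⊥ := by
    rw [hQ, eq_bot_iff]
    refine iSup_le fun p => iSup_le fun hp => ?_
    rcases le_or_gt mA p.1 with h1 | h1
    · have : NA ^ p.1 = ⊥ := by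
        rw [show p.1 = mA + (p.1 - mA) by omega, pow_add, hNApow, Submodule.bot_mul]
      rw [hP]
      simp only []
      rw [this, Submodule.bot_mul, Submodule.map₂_bot_left]
    · have h2 : mB ≤ p.2 := by omega
      have : NB ^ p.2 = ⊥ := by
        rw [show p.2 = mB + (p.2 - mB) by omega, pow_add, hNBpow, Submodule.bot_mul]
      rw [hP]
      simp only []
      rw [this, Submodule.bot_mul, Submodule.map₂_bot_right]
  have hJbot : J ^ (mA + mB) = ⊥ := by
    have : mA + mB = (mA + mB - 1) + 1 := by omega
    rw [eq_bot_iff, this]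
    exact le_trans (hJQ _) (by rw [← this, hQbot])
  -- corner decomposition
  have hCT : Submodule.map₂ mk2 CA CB ≤ Submodule.span k {E} ⊔ J := by
    rw [Submodule.map₂_le]
    intro x hx y hy
    obtain ⟨lx, hlx⟩ := corner_structure (k := k) he hx.1 hx.2
    obtain ⟨ly, hly⟩ := corner_structure (k := k) hf hy.1 hy.2
    have hxmem : x - lx • e ∈ NA := by
      refine ⟨⟨?_, ?_⟩, hlx⟩
      · rw [mul_sub, hx.1, mul_smul_comm, hee]
      · rw [sub_mul, hx.2, smul_mul_assoc, hee]
    have hymem : y - ly • f ∈ NB := by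
      refine ⟨⟨?_, ?_⟩, hly⟩
      · rw [mul_sub, hy.1, mul_smul_comm, hff]
      · rw [sub_mul, hy.2, smul_mul_assoc, hff]
    refine Submodule.mem_sup.2 ⟨(lx * ly) • E,
      Submodule.smul_mem _ _ (Submodule.mem_span_singleton_self E),
      (x - lx • e) ⊗ₜ[k] y + (lx • e) ⊗ₜ[k] (y - ly • f), ?_, ?_⟩
    · refine Submodule.add_mem _ ?_ ?_
      · exact Submodule.mem_sup_left (Submodule.apply_mem_map₂ _ hxmem hy)
      · exact Submodule.mem_sup_right
          (Submodule.apply_mem_map₂ _ (Submodule.smul_mem _ _ he_mem) hymem)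
    · rw [hE]
      simp only [TensorProduct.sub_tmul, TensorProduct.tmul_sub, TensorProduct.smul_tmul',
        TensorProduct.tmul_smul, smul_smul]
      rw [mul_comm ly lx]
      abel
  -- now the primitivity proof
  refine ⟨hEidem, hEne, ?_⟩
  intro a b ha hb hab hba hsum
  have hEa : E * a = a := by rw [hsum, add_mul, ha.eq, hba, add_zero]
  have haE : a * E = a := by rw [hsum, mul_add, ha.eq, hab, add_zero]
  have hEb : E * b = b := by rw [hsum, add_mul, hb.eq, hab, zero_add]
  have hbE : b * E = b := by rw [hsum, mul_add, hb.eq, hba, zero_add]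
  have haC : a ∈ Submodule.map₂ mk2 CA CB := by
    have := corner_tensor_mem (k := k) e f hee hff a
    rwa [← hE, hEa, haE] at this
  have hbC : b ∈ Submodule.map₂ mk2 CA CB := by
    have := corner_tensor_mem (k := k) e f hee hff b
    rwa [← hE, hEb, hbE] at this
  obtain ⟨ya, hya, ja, hja, hasum⟩ := Submodule.mem_sup.1 (hCT haC)
  obtain ⟨yb, hyb, jb, hjb, hbsum⟩ := Submodule.mem_sup.1 (hCT hbC)
  obtain ⟨la, hla⟩ := Submodule.mem_span_singleton.1 hya
  obtain ⟨lb, hlb⟩ := Submodule.mem_span_singleton.1 hyb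
  subst hla hlb
  -- j ∈ J is nilpotent of exponent mA + mB
  have hJnil : ∀ j ∈ J, j ^ (mA + mB) = 0 := by
    intro j hj
    have : j ^ (mA + mB) ∈ J ^ (mA + mB) := Submodule.pow_mem_pow _ hj _
    rw [hJbot] at this
    simpa using this
  -- scalars add to 1
  have hlab : la + lb = 1 := by
    by_contra hne
    have hEJ : E ∈ J := by
      have h1 : E = (la • E + ja) + (lb • E + jb) := by rw [hasum, hbsum]; exact hsum
      have hsum2 : (1 - la - lb) • E = ja + jb := by
        have h2 : (la • E + ja) + (lb • E + jb) - la • E - lb • E = ja + jb := by abel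
        rw [sub_smul, sub_smul, one_smul, ← h2, ← h1]
      have hcoef : (1 : k) - la - lb ≠ 0 := by
        intro h
        exact hne (by linear_combination -h)
      have hE' : E = (1 - la - lb)⁻¹ • (ja + jb) := by
        rw [← hsum2, smul_smul, inv_mul_cancel₀ hcoef, one_smul]
      rw [hE']
      exact Submodule.smul_mem _ _ (Submodule.add_mem _ hja hjb)
    have := hJnil E hEJ
    rw [idem_pow' hEidem (by omega : 0 < mA + mB)] at this
    exact hEne this
  -- key computation : an idempotent c = l • E + j with j nilpotent and l ≠ 1 is 0
  have hkill : ∀ (c : A ⊗[k] B) (l : k) (j : A ⊗[k] B), IsIdempotentElem c → c * E = c →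
      c = l • E + j → j ^ (mA + mB) = 0 → l ≠ 1 → c = 0 := by
    intro c l j hc hcE hdecomp hjnil hl1
    have hcj : c * j = (1 - l) • c := by
      have : j = c - l • E := by rw [hdecomp]; abel
      rw [this, mul_sub, hc.eq, mul_smul_comm, hcE, sub_smul, one_smul]
    have hpow : ∀ i : ℕ, c * j ^ i = (1 - l) ^ i • c := by
      intro i
      induction i with
      | zero => simp
      | succ i ih =>
        rw [pow_succ', ← mul_assoc, hcj, smul_mul_assoc, ih, smul_smul, ← pow_succ']
    have := hpow (mA + mB)
    rw [hjnil, mul_zero] at this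
    have hne1 : ((1 : k) - l) ^ (mA + mB) ≠ 0 := pow_ne_zero _ (sub_ne_zero.mpr (Ne.symm hl1))
    exact (smul_eq_zero.1 this.symm).resolve_left hne1
  by_cases hla1 : la = 1
  · right
    have hlb0 : lb ≠ 1 := by
      intro h
      rw [hla1, h] at hlab
      exact one_ne_zero (by linear_combination hlab : (1 : k) = 0)
    exact hkill b lb jb hb hbE hbsum.symm (hJnil jb hjb) hlb0
  · left
    exact hkill a la ja ha haE hasum.symm (hJnil ja hja) hla1

end Tensor

open TensorProduct in
/-- over an algebraically closed field `k`, if `e` and `f` are primitive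
idempotents of finite-dimensional `k`-algebras `A` and `B`, then `e ⊗ f` is a primitive
idempotent of `A ⊗[k] B`. -/
theorem primitive_idem_tensor (k : Type) [Field k] [IsAlgClosed k]
    (A B : Type) [Ring A] [Algebra k A] [FiniteDimensional k A]
    [Ring B] [Algebra k B] [FiniteDimensional k B]
    (e : A) (f : B) (he : IsPrimitiveIdem e) (hf : IsPrimitiveIdem f) :
    IsPrimitiveIdem (e ⊗ₜ[k] f : A ⊗[k] B) := by
  exact primitive_idem_tensor' e f he hf
end

section
/- Let k be a field, P a finite group, and M a bounded complex of finite-dimensional kP-modules such that the algebra H_0(End_k(M)) of chain self-maps of M modulo homotopy, with its kP-interior structure, is a primitive kP-interior algebra (i.e. its P-fixed subalgebra under conjugation is local). Then the homology of M vanishes in all degrees except one degree q, and there is a kP-interior algebra isomorphism H_0(End_k(M)) ≅ End_k(H_q(M)). -/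
open CategoryTheory CategoryTheory.Limits

noncomputable section

variable (k : Type) [Field k]

/-- The image of a chain complex in the homotopy category; its endomorphism ring is the
algebra `H₀(End_k(M))` of chain self-maps of `M` modulo chain homotopy. -/
abbrev htpyObj (M : HomologicalComplex (ModuleCat k) (ComplexShape.down ℤ)) :
    HomotopyCategory (ModuleCat k) (ComplexShape.down ℤ) :=
  (HomotopyCategory.quotient (ModuleCat k) (ComplexShape.down ℤ)).obj M

/-- The `q`-th homology functor on the homotopy category. -/
abbrev HF (q : ℤ) :
    HomotopyCategory (ModuleCat k) (ComplexShape.down ℤ) ⥤ ModuleCat k :=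
  HomotopyCategory.homologyFunctor (ModuleCat k) (ComplexShape.down ℤ) q

/-- The image in `H₀(End_k(M))` of the interior structural map `ρ : P →* (End M)ˣ`,
`P` acting on the complex `M` by chain automorphisms in each degree. -/
def interiorImage (M : HomologicalComplex (ModuleCat k) (ComplexShape.down ℤ))
    {P : Type} [Group P] (ρ : P →* (CategoryTheory.End M)ˣ) :
    Set (CategoryTheory.End (htpyObj k M)) :=
  Set.range fun g : P =>
    (HomotopyCategory.quotient (ModuleCat k) (ComplexShape.down ℤ)).map
      ((ρ g : CategoryTheory.End M))

variable (M : HomologicalComplex (ModuleCat k) (ComplexShape.down ℤ))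

lemma exists_ginv {A B : ModuleCat k} (f : A ⟶ B) : ∃ s : B ⟶ A, f ≫ s ≫ f = f := by
  obtain ⟨σ, hσ⟩ := (LinearMap.range f.hom).subtype.exists_leftInverse_of_injective
      (by simp [Submodule.ker_subtype])
  have hrr : LinearMap.range f.hom.rangeRestrict = ⊤ := LinearMap.range_rangeRestrict f.hom
  obtain ⟨τ, hτ⟩ := f.hom.rangeRestrict.exists_rightInverse_of_surjective hrr
  refine ⟨ModuleCat.ofHom (τ.comp σ), ?_⟩
  ext a
  have h1 : σ (f.hom a) = f.hom.rangeRestrict a := by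
    have := LinearMap.congr_fun hσ (f.hom.rangeRestrict a)
    simpa using this
  have h2 : f.hom.rangeRestrict (τ (f.hom.rangeRestrict a)) = f.hom.rangeRestrict a :=
    LinearMap.congr_fun hτ (f.hom.rangeRestrict a)
  have h3 : f.hom (τ (f.hom.rangeRestrict a)) = f.hom a := congrArg Subtype.val h2
  show f.hom (τ (σ (f.hom a))) = f.hom a
  rw [h1]; exact h3

variable (M : HomologicalComplex (ModuleCat k) (ComplexShape.down ℤ))

/-- generalized inverse of `M.d j i`. -/
def gs (i j : ℤ) : M.X i ⟶ M.X j := (exists_ginv k (M.d j i)).choose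

lemma gs_spec (i j : ℤ) : M.d j i ≫ gs k M i j ≫ M.d j i = M.d j i :=
  (exists_ginv k (M.d j i)).choose_spec

/-- the degreewise component of the chain map `E`. -/
def Ef (i : ℤ) : M.X i ⟶ M.X i :=
  𝟙 _ - M.d i (i-1) ≫ gs k M (i-1) i - gs k M i (i+1) ≫ M.d (i+1) i

lemma d_Ef (i : ℤ) : M.d (i+1) i ≫ Ef k M i = 0 := by
  simp only [Ef, Preadditive.comp_sub, Category.comp_id]
  rw [gs_spec k M i (i+1), M.d_comp_d_assoc]
  simp

lemma Ef_d (i : ℤ) : Ef k M i ≫ M.d i (i-1) = 0 := by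
  simp only [Ef, Preadditive.sub_comp, Category.id_comp]
  rw [Category.assoc, gs_spec k M (i-1) i, Category.assoc, M.d_comp_d, comp_zero]
  simp

/-- the chain map `E`, homotopic to the identity, with `d ≫ E = 0` and `E ≫ d = 0`. -/
def E : M ⟶ M where
  f i := Ef k M i
  comm' i j hij := by
    obtain rfl : j + 1 = i := hij
    have h1 := Ef_d k M (j+1)
    rw [show (j : ℤ) + 1 - 1 = j by ring] at h1
    rw [h1, d_Ef k M j]

/-- homotopy from `E` to the identity. -/
def htyE : Homotopy (E k M) (𝟙 M) where
  hom i j := if j = i + 1 then -(gs k M i j) else 0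
  zero i j h := by
    show (if j = i + 1 then -(gs k M i j) else 0) = 0
    rw [if_neg]
    intro hh
    exact h (by simpa [ComplexShape.down_Rel] using hh.symm)
  comm i := by
    rw [dNext_eq _ (show (ComplexShape.down ℤ).Rel i (i-1) by simp [ComplexShape.down_Rel]),
      prevD_eq _ (show (ComplexShape.down ℤ).Rel (i+1) i by simp [ComplexShape.down_Rel])]
    rw [if_pos (by ring : i = i - 1 + 1), if_pos rfl]
    simp only [E, Ef, HomologicalComplex.id_f, Preadditive.comp_neg, Preadditive.neg_comp]
    abel

/-- the idempotent chain map `F = E ≫ E`. -/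
def F : M ⟶ M := E k M ≫ E k M

/-- homotopy from `F` to the identity. -/
def htyF : Homotopy (F k M) (𝟙 M) :=
  ((htyE k M).comp (htyE k M)).trans (Homotopy.ofEq (Category.id_comp _))

lemma Ff_eq (i : ℤ) : (F k M).f i = Ef k M i ≫ Ef k M i := rfl

lemma d_Ff (i : ℤ) : M.d (i+1) i ≫ (F k M).f i = 0 := by
  rw [Ff_eq, ← Category.assoc, d_Ef, zero_comp]

lemma Ff_d (i : ℤ) : (F k M).f i ≫ M.d i (i-1) = 0 := by
  rw [Ff_eq, Category.assoc, Ef_d, comp_zero]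

lemma Ef_a (i : ℤ) : Ef k M i ≫ (M.d i (i-1) ≫ gs k M (i-1) i) = 0 := by
  rw [← Category.assoc, Ef_d, zero_comp]

lemma b_Ef (i : ℤ) : (gs k M i (i+1) ≫ M.d (i+1) i) ≫ Ef k M i = 0 := by
  rw [Category.assoc, d_Ef, comp_zero]

lemma Ef_sq (i : ℤ) : Ef k M i ≫ Ef k M i
    = Ef k M i - (M.d i (i-1) ≫ gs k M (i-1) i) ≫ Ef k M i := by
  have h : (𝟙 (M.X i) - M.d i (i-1) ≫ gs k M (i-1) i - gs k M i (i+1) ≫ M.d (i+1) i) ≫ Ef k M i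
      = Ef k M i - (M.d i (i-1) ≫ gs k M (i-1) i) ≫ Ef k M i := by
    rw [Preadditive.sub_comp, Preadditive.sub_comp, Category.id_comp, b_Ef, sub_zero]
  exact h

lemma Ef_cube (i : ℤ) : Ef k M i ≫ (Ef k M i ≫ Ef k M i) = Ef k M i ≫ Ef k M i := by
  rw [Ef_sq, Preadditive.comp_sub, ← Category.assoc, ← Category.assoc, Ef_d, zero_comp,
    zero_comp, sub_zero]
  exact Ef_sq k M i

lemma Ff_idem (i : ℤ) : (F k M).f i ≫ (F k M).f i = (F k M).f i := by
  rw [Ff_eq, Category.assoc, Ef_cube, Ef_cube]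

/-- the complex of ranges of `F`, with zero differentials. -/
def K : HomologicalComplex (ModuleCat k) (ComplexShape.down ℤ) where
  X i := ModuleCat.of k (LinearMap.range ((F k M).f i).hom)
  d _ _ := 0
  shape _ _ _ := rfl
  d_comp_d' := by intros; simp

lemma K_d (i j : ℤ) : (K k M).d i j = 0 := rfl

/-- the projection `M ⟶ K`. -/
def rr : M ⟶ K k M where
  f i := ModuleCat.ofHom ((F k M).f i).hom.rangeRestrict
  comm' i j hij := by
    obtain rfl : j + 1 = i := hij
    symm
    ext x
    apply Subtype.ext
    show ((F k M).f j).hom ((M.d (j+1) j).hom x) = 0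
    exact LinearMap.congr_fun (congrArg ModuleCat.Hom.hom (d_Ff k M j)) x

/-- the inclusion `K ⟶ M`. -/
def ii : K k M ⟶ M where
  f i := ModuleCat.ofHom (LinearMap.range ((F k M).f i).hom).subtype
  comm' i j hij := by
    obtain rfl : j + 1 = i := hij
    ext ⟨y, hy⟩
    obtain ⟨x, rfl⟩ := hy
    have h1 := Ff_d k M (j+1)
    rw [show (j : ℤ) + 1 - 1 = j by ring] at h1
    show (M.d (j+1) j).hom (((F k M).f (j+1)).hom x) = 0
    exact LinearMap.congr_fun (congrArg ModuleCat.Hom.hom h1) x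

lemma rr_ii : rr k M ≫ ii k M = F k M := by
  ext i x
  rfl

lemma ii_rr : ii k M ≫ rr k M = 𝟙 (K k M) := by
  ext i ⟨y, hy⟩
  obtain ⟨x, rfl⟩ := hy
  apply Subtype.ext
  show ((F k M).f i).hom (((F k M).f i).hom x) = ((F k M).f i).hom x
  exact LinearMap.congr_fun (congrArg ModuleCat.Hom.hom (Ff_idem k M i)) x

/-- the homotopy equivalence between `M` and `K`. -/
def equivMK : HomotopyEquiv M (K k M) where
  hom := rr k M
  inv := ii k M
  homotopyHomInvId := (Homotopy.ofEq (rr_ii k M)).trans (htyF k M)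
  homotopyInvHomId := Homotopy.ofEq (ii_rr k M)

lemma idem_eq_zero_or_one {R : Type*} [Ring R] [IsLocalRing R] {e : R} (he : e * e = e) :
    e = 0 ∨ e = 1 := by
  rcases IsLocalRing.isUnit_or_isUnit_of_add_one (a := e) (b := 1 - e) (by abel) with h | h
  · right
    exact h.mul_left_cancel (by rw [he, mul_one])
  · left
    have h2 : (1 - e) * (1 - e) = (1 - e) * 1 := by
      rw [mul_one, sub_mul, mul_sub, mul_sub, one_mul, one_mul, mul_one, he]
      abel
    exact sub_eq_self.mp (h.mul_left_cancel h2)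

lemma Q_inj' {g g' : K k M ⟶ K k M}
    (h : (HomotopyCategory.quotient (ModuleCat k) (ComplexShape.down ℤ)).map g
       = (HomotopyCategory.quotient (ModuleCat k) (ComplexShape.down ℤ)).map g') :
    g = g' := by
  have hty := HomotopyCategory.homotopyOfEq _ _ h
  apply HomologicalComplex.hom_f_injective
  funext i
  have hc := hty.comm i
  rw [dNext_eq hty.hom (show (ComplexShape.down ℤ).Rel i (i-1) by
        simp [ComplexShape.down_Rel]),
      prevD_eq hty.hom (show (ComplexShape.down ℤ).Rel (i+1) i by
        simp [ComplexShape.down_Rel])] at hc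
  have : g.f i = g'.f i := by simpa [K_d] using hc
  exact this

/-- the projection onto degree `q` of `K`. -/
def pr (q : ℤ) : K k M ⟶ K k M where
  f i := if i = q then 𝟙 _ else 0
  comm' i j _ := by simp [K_d]

lemma pr_comm (q : ℤ) (g : K k M ⟶ K k M) : g ≫ pr k M q = pr k M q ≫ g := by
  ext i
  by_cases h : i = q
  · subst h; simp [pr]
  · simp [pr, if_neg h]

lemma pr_idem (q : ℤ) : pr k M q ≫ pr k M q = pr k M q := by
  ext i
  by_cases h : i = q
  · subst h; simp [pr]
  · simp [pr, if_neg h]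

lemma pr_f_self (q : ℤ) : (pr k M q).f q = 𝟙 _ := if_pos rfl

lemma pr_f_ne (i q : ℤ) (h : i ≠ q) : (pr k M q).f i = 0 := if_neg h

/-- the isomorphism with a single complex, given concentration. -/
def isoSingle (q : ℤ) (hz : ∀ i, i ≠ q → IsZero ((K k M).X i)) :
    K k M ≅ (HomologicalComplex.single (ModuleCat k) (ComplexShape.down ℤ) q).obj
      ((K k M).X q) where
  hom := HomologicalComplex.mkHomToSingle (𝟙 _) (fun i _ => by rw [K_d, zero_comp])
  inv := HomologicalComplex.mkHomFromSingle (𝟙 _) (fun i _ => by rw [K_d, comp_zero])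
  hom_inv_id := by
    apply HomologicalComplex.hom_f_injective
    funext i
    by_cases h : i = q
    · subst h; simp
    · exact (hz i h).eq_of_src _ _
  inv_hom_id := by
    apply HomologicalComplex.hom_f_injective
    funext i
    by_cases h : i = q
    · subst h; simp
    · exact (HomologicalComplex.isZero_single_obj_X
        (ComplexShape.down ℤ) q ((K k M).X q) i h).eq_of_src _ _

abbrev Qu := HomotopyCategory.quotient (ModuleCat k) (ComplexShape.down ℤ)

/-- The isomorphism in the homotopy category between `M` and `K`. -/
def Phi : htpyObj k M ≅ (Qu k).obj (K k M) :=
  HomotopyCategory.isoOfHomotopyEquiv (equivMK k M)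

/-- The image in the homotopy category of the degree-`q` projection, conjugated back. -/
def eps (q : ℤ) : CategoryTheory.End (htpyObj k M) :=
  (Phi k M).hom ≫ (Qu k).map (pr k M q) ≫ (Phi k M).inv

lemma map_pr_eq (q : ℤ) :
    (Qu k).map (pr k M q) = (Phi k M).inv ≫ eps k M q ≫ (Phi k M).hom := by
  simp [eps]

lemma eps_comm (q : ℤ) (α : CategoryTheory.End (htpyObj k M)) :
    α ≫ eps k M q = eps k M q ≫ α := by
  obtain ⟨g, hg⟩ := (Qu k).map_surjective ((Phi k M).inv ≫ α ≫ (Phi k M).hom)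
  have hα : α = (Phi k M).hom ≫ (Qu k).map g ≫ (Phi k M).inv := by
    rw [hg]
    simp
  rw [hα]
  show (_ ≫ _ ≫ _) ≫ eps k M q = eps k M q ≫ _ ≫ _ ≫ _
  simp only [eps, Category.assoc, Iso.inv_hom_id_assoc]
  rw [← Functor.map_comp_assoc, ← Functor.map_comp_assoc, pr_comm]

lemma eps_idem (q : ℤ) : eps k M q ≫ eps k M q = eps k M q := by
  simp only [eps, Category.assoc, Iso.inv_hom_id_assoc]
  rw [← Functor.map_comp_assoc, pr_idem]

/-- the composite isomorphism from the `q`-th homology of `htpyObj M` to `K.X q`. -/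
def bigIso (q : ℤ) (hz : ∀ i, i ≠ q → IsZero ((K k M).X i)) :
    (HF k q).obj (htpyObj k M) ≅ (K k M).X q :=
  (HF k q).mapIso (Phi k M)
    ≪≫ (HomotopyCategory.homologyFunctorFactors (ModuleCat k)
          (ComplexShape.down ℤ) q).app (K k M)
    ≪≫ (HomologicalComplex.homologyFunctor (ModuleCat k)
          (ComplexShape.down ℤ) q).mapIso (isoSingle k M q hz)
    ≪≫ (HomologicalComplex.homologyFunctorSingleIso (ModuleCat k)
          (ComplexShape.down ℤ) q).app ((K k M).X q)

lemma HF_map_Qmap (j : ℤ) {A B : HomologicalComplex (ModuleCat k) (ComplexShape.down ℤ)}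
    (g : A ⟶ B) :
    (HF k j).map ((Qu k).map g)
      = (HomotopyCategory.homologyFunctorFactors (ModuleCat k)
            (ComplexShape.down ℤ) j).hom.app A
        ≫ (HomologicalComplex.homologyFunctor (ModuleCat k) (ComplexShape.down ℤ) j).map g
        ≫ (HomotopyCategory.homologyFunctorFactors (ModuleCat k)
            (ComplexShape.down ℤ) j).inv.app B :=
  (NatIso.naturality_2 (HomotopyCategory.homologyFunctorFactors (ModuleCat k)
    (ComplexShape.down ℤ) j) g).symm

lemma H_map_single (j : ℤ) {A B : ModuleCat k} (φ : A ⟶ B) :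
    (HomologicalComplex.homologyFunctor (ModuleCat k) (ComplexShape.down ℤ) j).map
        ((HomologicalComplex.single (ModuleCat k) (ComplexShape.down ℤ) j).map φ)
      = (HomologicalComplex.homologyFunctorSingleIso (ModuleCat k)
            (ComplexShape.down ℤ) j).hom.app A
        ≫ φ
        ≫ (HomologicalComplex.homologyFunctorSingleIso (ModuleCat k)
            (ComplexShape.down ℤ) j).inv.app B :=
  (NatIso.naturality_2 (HomologicalComplex.homologyFunctorSingleIso (ModuleCat k)
    (ComplexShape.down ℤ) j) φ).symm

/-- the comparison map realizing every homotopy class of self-maps of `M` from an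
endomorphism of `K.X q`. -/
def TT (q : ℤ) (hz : ∀ i, i ≠ q → IsZero ((K k M).X i))
    (φ : (K k M).X q ⟶ (K k M).X q) : CategoryTheory.End (htpyObj k M) :=
  (Phi k M).hom ≫ (Qu k).map ((isoSingle k M q hz).hom
    ≫ (HomologicalComplex.single (ModuleCat k) (ComplexShape.down ℤ) q).map φ
    ≫ (isoSingle k M q hz).inv) ≫ (Phi k M).inv

lemma map_TT (q : ℤ) (hz : ∀ i, i ≠ q → IsZero ((K k M).X i))
    (φ : (K k M).X q ⟶ (K k M).X q) :
    (HF k q).map (TT k M q hz φ)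
      = (bigIso k M q hz).hom ≫ φ ≫ (bigIso k M q hz).inv := by
  rw [TT, Functor.map_comp, Functor.map_comp, HF_map_Qmap, Functor.map_comp,
    Functor.map_comp, H_map_single]
  simp only [bigIso, Iso.trans_hom, Iso.trans_inv, Functor.mapIso_hom, Functor.mapIso_inv,
    Iso.app_hom, Iso.app_inv, Category.assoc]

lemma TT_bijective (q : ℤ) (hz : ∀ i, i ≠ q → IsZero ((K k M).X i)) :
    Function.Bijective (TT k M q hz) := by
  constructor
  · intro φ φ' h
    rw [TT, TT] at h
    have h2 := congrArg (fun z => (Phi k M).inv ≫ z ≫ (Phi k M).hom) h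
    simp only [Category.assoc, Iso.inv_hom_id, Category.comp_id, Iso.inv_hom_id_assoc] at h2
    have h3 := Q_inj' k M h2
    have h4 := congrArg (fun z => (isoSingle k M q hz).inv ≫ z ≫ (isoSingle k M q hz).hom) h3
    simp only [Category.assoc, Iso.inv_hom_id, Category.comp_id, Iso.inv_hom_id_assoc] at h4
    exact (HomologicalComplex.single (ModuleCat k) (ComplexShape.down ℤ) q).map_injective h4
  · intro α
    obtain ⟨g, hg⟩ := (Qu k).map_surjective ((Phi k M).inv ≫ α ≫ (Phi k M).hom)
    refine ⟨(HomologicalComplex.single (ModuleCat k) (ComplexShape.down ℤ) q).preimage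
      ((isoSingle k M q hz).inv ≫ g ≫ (isoSingle k M q hz).hom), ?_⟩
    rw [TT, Functor.map_preimage]
    have h3 : (isoSingle k M q hz).hom ≫ ((isoSingle k M q hz).inv ≫ g
        ≫ (isoSingle k M q hz).hom) ≫ (isoSingle k M q hz).inv = g := by simp
    rw [h3, hg]
    simp


/-- let `M` be a bounded complex of finite-dimensional `kP`-modules (a
bounded complex of finite-dimensional `k`-spaces with `P` acting by chain automorphisms
via `ρ`), such that `H₀(End_k(M))` is a primitive `kP`-interior algebra, i.e. its
`P`-fixed subalgebra — the centralizer of the image of `P` — is local.  Then the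
homology of `M` vanishes in all degrees except one degree `q`, and taking induced maps
on degree-`q` homology is a `kP`-interior algebra isomorphism
`H₀(End_k(M)) ≅ End_k(H_q(M))`. -/
theorem primitive_implies_homology_concentrated
    (M : HomologicalComplex (ModuleCat k) (ComplexShape.down ℤ))
    (hfin : ∀ i : ℤ, FiniteDimensional k ↥(M.X i))
    (hbdd : ∃ a b : ℤ, ∀ i : ℤ, (i < a ∨ b < i) → IsZero (M.X i))
    (P : Type) [Group P] [Finite P] (ρ : P →* (CategoryTheory.End M)ˣ)
    (hprim : IsLocalRing ↥(Subring.centralizer (interiorImage k M ρ))) :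
    ∃ q : ℤ, (∀ j : ℤ, j ≠ q → IsZero ((HF k j).obj (htpyObj k M))) ∧
      (∀ f g : CategoryTheory.End (htpyObj k M),
        (HF k q).map (f ≫ g) = (HF k q).map f ≫ (HF k q).map g) ∧
      Function.Bijective
        (fun f : CategoryTheory.End (htpyObj k M) => (HF k q).map f) := by
  classical
  haveI := hprim
  by_cases hall : ∀ j : ℤ, eps k M j = 0
  · -- all projections vanish: the centralizer would be the zero ring, contradiction
    exfalso
    have hK1 : (𝟙 (K k M) : K k M ⟶ K k M) = 0 := by
      apply HomologicalComplex.hom_f_injective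
      funext i
      have h0 : (Qu k).map (pr k M i) = 0 := by
        rw [map_pr_eq, hall i]; simp
      have hpr0 : pr k M i = 0 := Q_inj' k M (by rw [h0, Functor.map_zero])
      have hid : 𝟙 ((K k M).X i) = 0 := by
        have h2 := congrArg (fun φ => HomologicalComplex.Hom.f φ i) hpr0
        simpa [pr_f_self k M i] using h2
      show HomologicalComplex.Hom.f (𝟙 (K k M)) i
        = HomologicalComplex.Hom.f (0 : K k M ⟶ K k M) i
      simpa using hid
    have h1 : (𝟙 (htpyObj k M) : _ ⟶ _) = 0 := by
      have h2 : (𝟙 ((Qu k).obj (K k M)) : _ ⟶ _) = 0 := by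
        rw [← (Qu k).map_id, hK1, Functor.map_zero]
      calc 𝟙 (htpyObj k M) = (Phi k M).hom ≫ 𝟙 _ ≫ (Phi k M).inv := by simp
      _ = 0 := by rw [h2]; simp
    have h3 : (1 : Subring.centralizer (interiorImage k M ρ)) = 0 := by
      apply Subtype.ext
      show (1 : CategoryTheory.End (htpyObj k M)) = 0
      rw [CategoryTheory.End.one_def, h1]
    exact one_ne_zero h3
  · push_neg at hall
    obtain ⟨q, hq⟩ := hall
    have hmem : eps k M q ∈ Subring.centralizer (interiorImage k M ρ) :=
      Subring.mem_centralizer_iff.mpr (fun g _ => by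
        rw [CategoryTheory.End.mul_def, CategoryTheory.End.mul_def]
        exact (eps_comm k M q g).symm)
    have hidem2 : (⟨eps k M q, hmem⟩ : Subring.centralizer (interiorImage k M ρ))
        * ⟨eps k M q, hmem⟩ = ⟨eps k M q, hmem⟩ := by
      apply Subtype.ext
      show eps k M q * eps k M q = eps k M q
      rw [CategoryTheory.End.mul_def]
      exact eps_idem k M q
    rcases idem_eq_zero_or_one hidem2 with h0 | h1
    · exact absurd (congrArg Subtype.val h0) hq
    · have hepsone : eps k M q = 𝟙 (htpyObj k M) := by
        have h2 := congrArg Subtype.val h1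
        rw [← CategoryTheory.End.one_def]
        exact h2
      have hpr1 : pr k M q = 𝟙 (K k M) := by
        apply Q_inj'
        rw [map_pr_eq, hepsone, CategoryTheory.Functor.map_id]
        simp
      have hKzero : ∀ i, i ≠ q → IsZero ((K k M).X i) := by
        intro i hi
        rw [IsZero.iff_id_eq_zero]
        have h2 := congrArg (fun φ => HomologicalComplex.Hom.f φ i) hpr1
        simpa [pr_f_ne k M i q hi] using h2.symm
      refine ⟨q, ?_, fun f g => (HF k q).map_comp f g, ?_⟩
      · -- homology vanishes away from q
        intro j hj
        have hKh : IsZero ((K k M).homology j) := by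
          rw [← HomologicalComplex.exactAt_iff_isZero_homology]
          exact ShortComplex.exact_of_isZero_X₂ _ (hKzero j hj)
        have e2 : (HF k j).obj ((Qu k).obj (K k M)) ≅ (K k M).homology j :=
          (HomotopyCategory.homologyFunctorFactors (ModuleCat k)
            (ComplexShape.down ℤ) j).app (K k M)
        exact hKh.of_iso ((HF k j).mapIso (Phi k M) ≪≫ e2)
      · -- bijectivity
        have hTbij := TT_bijective k M q hKzero
        have hΩbij : Function.Bijective
            (fun φ : (K k M).X q ⟶ (K k M).X q =>
              ((bigIso k M q hKzero).hom ≫ φ ≫ (bigIso k M q hKzero).inv :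
              (HF k q).obj (htpyObj k M) ⟶ (HF k q).obj (htpyObj k M))) := by
          constructor
          · intro x y h
            have h2 := congrArg (fun z => (bigIso k M q hKzero).inv ≫ z
              ≫ (bigIso k M q hKzero).hom) h
            simpa only [Category.assoc, Iso.inv_hom_id, Category.comp_id,
              Iso.inv_hom_id_assoc] using h2
          · intro y
            exact ⟨(bigIso k M q hKzero).inv ≫ y ≫ (bigIso k M q hKzero).hom, by simp⟩
        have heq : (fun f : CategoryTheory.End (htpyObj k M) => (HF k q).map f)
            = (fun φ : (K k M).X q ⟶ (K k M).X q =>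
              ((bigIso k M q hKzero).hom ≫ φ ≫ (bigIso k M q hKzero).inv :
              (HF k q).obj (htpyObj k M) ⟶ (HF k q).obj (htpyObj k M)))
              ∘ (Equiv.ofBijective _ hTbij).symm := by
          funext f
          have h5 : TT k M q hKzero ((Equiv.ofBijective _ hTbij).symm f) = f :=
            (Equiv.ofBijective _ hTbij).apply_symm_apply f
          show (HF k q).map f = (bigIso k M q hKzero).hom
            ≫ ((Equiv.ofBijective _ hTbij).symm f) ≫ (bigIso k M q hKzero).inv
          rw [← map_TT, h5]
        rw [heq]
        exact hΩbij.comp (Equiv.ofBijective _ hTbij).symm.bijective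

end
end
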